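/- For any real constant c with 0 < c ≤ 1 and any natural number L ≥ 1, the sum ∑_{k=1}^{L} C(L,k) (−1)^{k+1} c^k / k is bounded below by log(L) + log(c). -/

import Mathlib

lemma binom_sum (x : ℝ) (n : ℕ) :
    ∑ k ∈ Finset.Icc 1 n, (n.choose k : ℝ) * (-1) ^ (k + 1) * x ^ k
      = 1 - (1 - x) ^ n := by
  have h := add_pow (-x) 1 n
  simp only [one_pow, mul_one] at h
  have h1 : (1 - x) ^ n = ∑ k ∈ Finset.range (n + 1), (-x) ^ k * (n.choose k : ℝ) := by
    rw [← h]; ring_nf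
  have h2 : Finset.range (n + 1) = insert 0 (Finset.Icc 1 n) := by
    ext k; simp [Nat.lt_succ_iff]; omega
  rw [h1, h2, Finset.sum_insert (by simp)]
  simp only [pow_zero, one_mul, Nat.choose_zero_right, Nat.cast_one]
  have : ∀ k ∈ Finset.Icc 1 n, (n.choose k : ℝ) * (-1) ^ (k + 1) * x ^ k
      = -((-x) ^ k * (n.choose k : ℝ)) := by
    intro k _; rw [neg_pow]; ring
  rw [Finset.sum_congr rfl this, Finset.sum_neg_distrib]
  ring

lemma alt_id (x : ℝ) (L : ℕ) :
    ∑ k ∈ Finset.Icc 1 L, (L.choose k : ℝ) * (-1) ^ (k + 1) * x ^ k / k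
      = ∑ p ∈ Finset.Icc 1 L, (1 - (1 - x) ^ p) / p := by
  induction L with
  | zero => simp
  | succ L ih =>
    have hsplit : ∀ k ∈ Finset.Icc 1 (L+1),
        ((L+1).choose k : ℝ) * (-1) ^ (k + 1) * x ^ k / k
          = (L.choose k : ℝ) * (-1) ^ (k + 1) * x ^ k / k
            + ((L+1).choose k : ℝ) * (-1) ^ (k + 1) * x ^ k / (L+1) := by
      intro k hk
      simp only [Finset.mem_Icc] at hk
      obtain ⟨j, rfl⟩ : ∃ j, k = j + 1 := ⟨k - 1, by omega⟩
      have hp : (L+1).choose (j+1) = L.choose j + L.choose (j+1) :=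
        Nat.choose_succ_succ' L j
      have hm : (L+1) * L.choose j = (L+1).choose (j+1) * (j+1) :=
        Nat.add_one_mul_choose_eq L j
      have hm' : ((L:ℝ)+1) * (L.choose j : ℝ)
          = ((L+1).choose (j+1) : ℝ) * ((j:ℝ)+1) := by exact_mod_cast hm
      have hj : ((j:ℝ)+1) ≠ 0 := by positivity
      have hL1 : ((L:ℝ)+1) ≠ 0 := by positivity
      rw [hp] at hm'
      push_cast at hm'
      push_cast [hp]
      field_simp
      linear_combination (x^(j+1)) * hm'
    rw [Finset.sum_congr rfl hsplit, Finset.sum_add_distrib]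
    rw [Finset.sum_Icc_succ_top (by omega : 1 ≤ L + 1)]
    rw [Finset.sum_Icc_succ_top (by omega : 1 ≤ L + 1)
      (fun p => (1 - (1 - x) ^ p) / p)]
    simp only [Nat.choose_succ_self, Nat.cast_zero, zero_mul, zero_div, add_zero]
    rw [ih, ← Finset.sum_div]
    have hb := binom_sum x (L+1)
    rw [hb]
    push_cast
    ring

theorem stmt_3 (c : ℝ) (hc0 : 0 < c) (hc1 : c ≤ 1) (L : ℕ) (hL : 1 ≤ L) :
    Real.log L + Real.log c
      ≤ ∑ k ∈ Finset.Icc 1 L, (L.choose k : ℝ) * (-1) ^ (k + 1) * c ^ k / k := by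
  rw [alt_id]
  have hy0 : (0:ℝ) ≤ 1 - c := by linarith
  have hy1 : |1 - c| < 1 := by rw [abs_of_nonneg hy0]; linarith
  -- bound 1 : log L ≤ harmonic sum
  have h1 : Real.log L ≤ ∑ p ∈ Finset.Icc 1 L, (1:ℝ) / p := by
    have := log_le_harmonic_floor (L:ℝ) (by positivity)
    rw [Nat.floor_natCast] at this
    refine this.trans_eq ?_
    rw [harmonic, ← Finset.Ico_add_one_right_eq_Icc, Finset.sum_Ico_eq_sum_range]
    push_cast
    exact Finset.sum_congr (by norm_num) fun i _ => by rw [one_div, add_comm]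
  -- bound 2 : geometric-log tail
  have h2 : ∑ p ∈ Finset.Icc 1 L, (1 - c) ^ p / p ≤ -Real.log c := by
    have hs := Real.hasSum_pow_div_log_of_abs_lt_one hy1
    have hc : 1 - (1 - c) = c := by ring
    rw [hc] at hs
    have : ∑ p ∈ Finset.Icc 1 L, (1 - c) ^ p / (p:ℝ)
        = ∑ n ∈ Finset.range L, (1 - c) ^ (n + 1) / ((n:ℝ) + 1) := by
      rw [← Finset.Ico_add_one_right_eq_Icc, Finset.sum_Ico_eq_sum_range]
      exact Finset.sum_congr (by norm_num) fun i _ => by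
        rw [add_comm 1 i]; push_cast; ring
    rw [this]
    exact sum_le_hasSum _ (fun n _ => by positivity) hs
  have h3 : ∑ p ∈ Finset.Icc 1 L, (1 - (1 - c) ^ p) / p
      = (∑ p ∈ Finset.Icc 1 L, (1:ℝ) / p) - ∑ p ∈ Finset.Icc 1 L, (1 - c) ^ p / p := by
    rw [← Finset.sum_sub_distrib]
    exact Finset.sum_congr rfl fun p _ => by ring
  rw [h3]
  linarith
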